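/- Under the hypotheses of the algebraic-dichotomy linearization theorem (algebraic dichotomy for x' = A(t)x with constants K, α; ‖f(t,x)‖ ≤ β μ'(t)/μ(t); ‖f(t,x₁) − f(t,x₂)‖ ≤ γ (μ'(t)/μ(t)) ‖x₁ − x₂‖; 6Kγα⁻¹ < 1), define H(t,x) = x + h(t,(t,x)) and G(t,y) = y + g(t,(t,y)), where h(·,(τ,ξ)) is the unique bounded solution of Z' = A(t)Z − f(t, X(t,τ,ξ)) and g(·,(τ,ξ)) is the unique bounded solution of Z' = A(t)Z + f(t, Y(t,τ,ξ) + Z). Then G(t, H(t,x)) = x for every t ∈ ℝ and every x ∈ ℝⁿ. -/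

import Mathlib

open MeasureTheory Filter Set

theorem G_comp_H_eq_id {n : ℕ}
    (μ μ' : ℝ → ℝ)
    (hμ_pos : ∀ t, 0 < μ t)
    (hμ_mono : StrictMono μ)
    (hμ_zero : μ 0 = 1)
    (hμ_bot : Filter.Tendsto μ Filter.atBot (nhds 0))
    (hμ_top : Filter.Tendsto μ Filter.atTop Filter.atTop)
    (hμ_deriv : ∀ t, HasDerivAt μ (μ' t) t)
    (A : ℝ → EuclideanSpace ℝ (Fin n) →L[ℝ] EuclideanSpace ℝ (Fin n))
    (hA_cont : Continuous A)
    (hA_bdd : ∃ C, ∀ t, ‖A t‖ ≤ C)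
    (T : ℝ → ℝ → EuclideanSpace ℝ (Fin n) →L[ℝ] EuclideanSpace ℝ (Fin n))
    (hT_id : ∀ t, T t t = ContinuousLinearMap.id ℝ (EuclideanSpace ℝ (Fin n)))
    (hT_cocycle : ∀ t τ s, (T t τ).comp (T τ s) = T t s)
    (hT_sol : ∀ s x₀ t, HasDerivAt (fun r => T r s x₀) (A t (T t s x₀)) t)
    (P : ℝ → EuclideanSpace ℝ (Fin n) →L[ℝ] EuclideanSpace ℝ (Fin n))
    (hP_proj : ∀ s, (P s).comp (P s) = P s)
    (K α : ℝ) (hK : 0 < K) (hα : 0 < α)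
    (h_commute : ∀ t s, (T t s).comp (P s) = (P t).comp (T t s))
    (h_dichP : ∀ t s, s ≤ t → ‖(T t s).comp (P s)‖ ≤ K * (μ t / μ s) ^ (-α))
    (h_dichQ : ∀ t s, t ≤ s →
      ‖(T t s).comp (ContinuousLinearMap.id ℝ (EuclideanSpace ℝ (Fin n)) - P s)‖ ≤ K * (μ s / μ t) ^ (-α))
    (f : ℝ → EuclideanSpace ℝ (Fin n) → EuclideanSpace ℝ (Fin n))
    (β γ : ℝ)
    (hf_bdd : ∀ t x, ‖f t x‖ ≤ β * (μ' t / μ t))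
    (hf_lip : ∀ t x₁ x₂, ‖f t x₁ - f t x₂‖ ≤ γ * (μ' t / μ t) * ‖x₁ - x₂‖)
    (h_small : 6 * K * γ * α⁻¹ < 1)
    (X : ℝ → ℝ → EuclideanSpace ℝ (Fin n) → EuclideanSpace ℝ (Fin n))
    (hX_init : ∀ τ ξ, X τ τ ξ = ξ)
    (hX_sol : ∀ τ ξ t, HasDerivAt (fun r => X r τ ξ) (A t (X t τ ξ) + f t (X t τ ξ)) t)
    (hX_flow : ∀ t s τ ξ, X t s (X s τ ξ) = X t τ ξ)
    (Y : ℝ → ℝ → EuclideanSpace ℝ (Fin n) → EuclideanSpace ℝ (Fin n))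
    (hY_init : ∀ τ ξ, Y τ τ ξ = ξ)
    (hY_sol : ∀ τ ξ t, HasDerivAt (fun r => Y r τ ξ) (A t (Y t τ ξ)) t)
    (hY_flow : ∀ t s τ ξ, Y t s (Y s τ ξ) = Y t τ ξ)
    (h : ℝ → ℝ → EuclideanSpace ℝ (Fin n) → EuclideanSpace ℝ (Fin n))
    (hh_sol : ∀ τ ξ t, HasDerivAt (fun r => h r τ ξ) (A t (h t τ ξ) - f t (X t τ ξ)) t)
    (hh_bdd : ∀ τ ξ, ∃ C, ∀ t, ‖h t τ ξ‖ ≤ C)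
    (hh_unique : ∀ τ ξ (z : ℝ → EuclideanSpace ℝ (Fin n)),
      (∀ t, HasDerivAt z (A t (z t) - f t (X t τ ξ)) t) →
      (∃ C, ∀ t, ‖z t‖ ≤ C) → ∀ t, z t = h t τ ξ)
    (g : ℝ → ℝ → EuclideanSpace ℝ (Fin n) → EuclideanSpace ℝ (Fin n))
    (hg_sol : ∀ τ ξ t, HasDerivAt (fun r => g r τ ξ) (A t (g t τ ξ) + f t (Y t τ ξ + g t τ ξ)) t)
    (hg_bdd : ∀ τ ξ, ∃ C, ∀ t, ‖g t τ ξ‖ ≤ C)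
    (hg_unique : ∀ τ ξ (z : ℝ → EuclideanSpace ℝ (Fin n)),
      (∀ t, HasDerivAt z (A t (z t) + f t (Y t τ ξ + z t)) t) →
      (∃ C, ∀ t, ‖z t‖ ≤ C) → ∀ t, z t = g t τ ξ)
    (H G : ℝ → EuclideanSpace ℝ (Fin n) → EuclideanSpace ℝ (Fin n))
    (hH_def : ∀ t x, H t x = x + h t t x)
    (hG_def : ∀ t y, G t y = y + g t t y) :
    ∀ t x, G t (H t x) = x := by

  intro τ ξ
  obtain ⟨C, hC⟩ := hA_bdd
  have hlip : ∀ t, LipschitzWith C.toNNReal (fun x => A t x) := by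
    intro t
    refine (A t).lipschitz.weaken ?_
    rw [← NNReal.coe_le_coe]
    exact le_trans (hC t) (Real.le_coe_toNNReal C)
  -- uniqueness for the homogeneous linear equation
  have lin_unique : ∀ (d : ℝ → EuclideanSpace ℝ (Fin n)),
      (∀ t, HasDerivAt d (A t (d t)) t) → d τ = 0 → ∀ t, d t = 0 := by
    intro d hd hd0 t
    set a := min τ t - 1 with ha
    set b := max τ t + 1 with hb
    have hτab : τ ∈ Set.Ioo a b := by
      constructor
      · have := min_le_left τ t; linarith
      · have := le_max_left τ t; linarith
    have htab : t ∈ Set.Icc a b := by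
      constructor
      · have := min_le_right τ t; linarith
      · have := le_max_right τ t; linarith
    have key := ODE_solution_unique_of_mem_Icc
      (v := fun t x => A t x) (s := fun _ => Set.univ)
      (fun t _ => (hlip t).lipschitzOnWith) hτab
      (fun r _ => (hd r).continuousAt.continuousWithinAt)
      (fun r _ => hd r) (fun _ _ => trivial)
      (continuousOn_const (c := (0 : EuclideanSpace ℝ (Fin n))))
      (fun r _ => by simpa using hasDerivAt_const r (0 : EuclideanSpace ℝ (Fin n)))
      (fun _ _ => trivial) (by simpa using hd0)
    exact key htab
  -- Step 1: Y t τ (H τ ξ) = X t τ ξ + h t τ ξ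
  have hY : ∀ t, Y t τ (H τ ξ) = X t τ ξ + h t τ ξ := by
    have hd : ∀ t, HasDerivAt (fun r => Y r τ (H τ ξ) - (X r τ ξ + h r τ ξ))
        (A t (Y t τ (H τ ξ) - (X t τ ξ + h t τ ξ))) t := by
      intro t
      have h2 := (hY_sol τ (H τ ξ) t).sub ((hX_sol τ ξ t).add (hh_sol τ ξ t))
      refine h2.congr_deriv ?_
      simp only [map_sub, map_add]
      abel
    have hd0 : Y τ τ (H τ ξ) - (X τ τ ξ + h τ τ ξ) = 0 := by
      rw [hY_init, hX_init, hH_def]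
      abel
    intro t
    have := lin_unique _ hd hd0 t
    exact sub_eq_zero.mp this
  -- Step 2: -(h t τ ξ) is the bounded solution g t τ (H τ ξ)
  have hz : ∀ t, -(h t τ ξ) = g t τ (H τ ξ) := by
    apply hg_unique τ (H τ ξ) (fun t => -(h t τ ξ))
    · intro t
      have hder := (hh_sol τ ξ t).neg
      refine hder.congr_deriv ?_
      rw [hY t]
      have harg : X t τ ξ + h t τ ξ + -(h t τ ξ) = X t τ ξ := by abel
      rw [harg, map_neg]
      abel
    · obtain ⟨C', hC'⟩ := hh_bdd τ ξ
      exact ⟨C', fun t => by simpa using hC' t⟩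
  rw [hG_def, ← hz τ, hH_def]
  abel
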